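/- Let k be a commutative ring and let S be a commutative bialgebra over k, with comultiplication Δ : S → S ⊗_k S and counit ε : S → k. Let J denote the kernel of the k-algebra homomorphism S ⊗_k S → k induced by applying ε to both tensor factors. Then for every s ∈ S with ε(s) = 0, the element Δ(s) − (s ⊗ 1 + 1 ⊗ s) lies in the ideal J² of S ⊗_k S. -/
import Mathlib


open scoped TensorProduct

/-- Every element of the augmentation ideal of a commutative bialgebra is additive
up to second order: if `ε s = 0` then `Δ s − (s ⊗ 1 + 1 ⊗ s)` lies in `J²`,
where `J = ker(ε ⊗ ε : S ⊗ S → k)`. -/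
theorem comul_sub_add_tmul_mem_ker_counit_sq
    (k S : Type*) [CommRing k] [CommRing S] [Bialgebra k S]
    (s : S) (hs : Coalgebra.counit (R := k) s = 0) :
    Coalgebra.comul (R := k) s - (s ⊗ₜ[k] (1 : S) + (1 : S) ⊗ₜ[k] s) ∈
      (RingHom.ker (Algebra.TensorProduct.lift (Bialgebra.counitAlgHom k S)
        (Bialgebra.counitAlgHom k S) (fun _ _ => Commute.all _ _))) ^ 2 := by
  classical
  set ε : S →ₐ[k] k := Bialgebra.counitAlgHom k S with hε
  set J := RingHom.ker (Algebra.TensorProduct.lift ε ε (fun _ _ => Commute.all _ _)) with hJ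
  let r := Coalgebra.Repr.arbitrary k s
  have h1 : ∑ i ∈ r.index, (ε (r.left i)) • (r.right i) = s := by
    have := congrArg (TensorProduct.lid k S) (Coalgebra.sum_counit_tmul_eq r)
    simp only [map_sum, TensorProduct.lid_tmul, Bialgebra.counitAlgHom_apply, one_smul] at this
    exact this
  have h2 : ∑ i ∈ r.index, (ε (r.right i)) • (r.left i) = s := by
    have := congrArg (TensorProduct.rid k S) (Coalgebra.sum_tmul_counit_eq r)
    simp only [map_sum, TensorProduct.rid_tmul, Bialgebra.counitAlgHom_apply, one_smul] at this
    exact this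
  have hC : ∑ i ∈ r.index, ε (r.left i) * ε (r.right i) = 0 := by
    have := congrArg ε h1
    simpa [map_sum, smul_eq_mul] using this.trans hs
  have key : ∑ i ∈ r.index,
      (r.left i - ε (r.left i) • (1 : S)) ⊗ₜ[k] (r.right i - ε (r.right i) • (1 : S))
      = Coalgebra.comul (R := k) s - (s ⊗ₜ[k] (1 : S) + (1 : S) ⊗ₜ[k] s) := by
    have expand : ∀ i ∈ r.index,
        (r.left i - ε (r.left i) • (1 : S)) ⊗ₜ[k] (r.right i - ε (r.right i) • (1 : S))
        = r.left i ⊗ₜ[k] r.right i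
          - (ε (r.right i) • r.left i) ⊗ₜ[k] (1 : S)
          - (1 : S) ⊗ₜ[k] (ε (r.left i) • r.right i)
          + (ε (r.left i) * ε (r.right i)) • ((1 : S) ⊗ₜ[k] (1 : S)) := by
      intro i _
      simp only [TensorProduct.sub_tmul, TensorProduct.tmul_sub, TensorProduct.smul_tmul',
        TensorProduct.smul_tmul, smul_smul]
      abel
    rw [Finset.sum_congr rfl expand]
    simp only [Finset.sum_add_distrib, Finset.sum_sub_distrib, ← TensorProduct.sum_tmul,
      ← TensorProduct.tmul_sum, ← Finset.sum_smul, h1, h2, hC, zero_smul, add_zero, r.eq]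
    abel
  rw [← key, sq]
  refine Ideal.sum_mem _ (fun i _ => ?_)
  have factor : (r.left i - ε (r.left i) • (1 : S)) ⊗ₜ[k] (r.right i - ε (r.right i) • (1 : S))
      = ((r.left i - ε (r.left i) • (1 : S)) ⊗ₜ[k] (1 : S))
        * ((1 : S) ⊗ₜ[k] (r.right i - ε (r.right i) • (1 : S))) := by
    rw [Algebra.TensorProduct.tmul_mul_tmul, mul_one, one_mul]
  rw [factor]
  refine Ideal.mul_mem_mul ?_ ?_ <;>
    simp [hJ, RingHom.mem_ker, Algebra.TensorProduct.lift_tmul, Algebra.algebraMap_eq_smul_one,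
      smul_eq_mul, map_smul]
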